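/- Let φ satisfy the hypotheses of the general phaseless sampling theorem: A₁,…,A_M bounded open sets, φ continuous with compact support and locally linearly independent on each A_m, every nonempty set S_k = {x : φ(x)φ(x−k) ≠ 0} meets ∪_{m=1}^M (A_m + ℤ^d), V(φ) has the local complement property on each A_m, and Γ = ∪_m Γ_m is chosen so |f|² on each A_m + l is determined by |f(γ+l)|², γ ∈ Γ_m. Then for f = Σ_k c(k)φ(·−k) and g = Σ_k d(k)φ(·−k) with |g(y)| = |f(y)| for all y ∈ Γ + ℤ^d, for each l ∈ ℤ^d and 1 ≤ m ≤ M there exists ε_{l,m} ∈ {−1,1} with d(k'+l) = ε_{l,m} c(k'+l) for all k' ∈ K_{A_m}; and if moreover the graph 𝒢_f is connected, there is a single ε ∈ {−1,1} with g = ε f. -/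

import Mathlib

/-- The signal `Σ_k c(k) φ(·−k)` in the shift-invariant space `V(φ)`. -/
noncomputable def sig (d : ℕ) (φ : (Fin d → ℝ) → ℝ) (c : (Fin d → ℤ) → ℝ) :
    (Fin d → ℝ) → ℝ :=
  fun x => ∑' k : Fin d → ℤ, c k * φ (fun i => x i - k i)

/-- `V(φ)` has the local complement property on `A`. -/
def LCPphi (d : ℕ) (φ : (Fin d → ℝ) → ℝ) (A : Set (Fin d → ℝ)) : Prop :=
  ∀ A' ⊆ A, ¬ ∃ c₁ c₂ : (Fin d → ℤ) → ℝ,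
    (¬ ∀ x ∈ A, sig d φ c₁ x = 0) ∧ (¬ ∀ x ∈ A, sig d φ c₂ x = 0) ∧
    (∀ x ∈ A', sig d φ c₁ x = 0) ∧ (∀ x ∈ A \ A', sig d φ c₂ x = 0)

/-- Adjacency relation of the graph `𝒢_f` for `f = Σ_k c(k) φ(·−k)`. -/
def GraphAdj (d : ℕ) (φ : (Fin d → ℝ) → ℝ) (c : (Fin d → ℤ) → ℝ)
    (k k' : Fin d → ℤ) : Prop :=
  k ≠ k' ∧ c k ≠ 0 ∧ c k' ≠ 0 ∧
    ∃ x : Fin d → ℝ, φ (fun i => x i - k i) * φ (fun i => x i - k' i) ≠ 0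

lemma fin_supp (d : ℕ) (φ : (Fin d → ℝ) → ℝ) (hsupp : HasCompactSupport φ)
    (x : Fin d → ℝ) : {k : Fin d → ℤ | φ (fun i => x i - k i) ≠ 0}.Finite := by
  obtain ⟨R, hR⟩ := (hsupp.isBounded).exists_norm_le
  apply Set.Finite.subset (Set.Finite.pi (fun i : Fin d =>
    Set.finite_Icc ⌈x i - R⌉ ⌊x i + R⌋))
  intro k hk
  have hmem : (fun i => x i - k i) ∈ tsupport φ := subset_tsupport φ hk
  have hnorm := hR _ hmem
  intro i _
  have h1 : |x i - k i| ≤ R := le_trans (norm_le_pi_norm (fun i => x i - k i) i) hnorm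
  rw [abs_le] at h1
  exact ⟨Int.ceil_le.2 (by linarith), Int.le_floor.2 (by linarith)⟩

lemma summ (d : ℕ) (φ : (Fin d → ℝ) → ℝ) (hsupp : HasCompactSupport φ)
    (c : (Fin d → ℤ) → ℝ) (x : Fin d → ℝ) :
    Summable (fun k : Fin d → ℤ => c k * φ (fun i => x i - k i)) := by
  apply summable_of_ne_finset_zero (s := (fin_supp d φ hsupp x).toFinset)
  intro k hk
  simp only [Set.Finite.mem_toFinset, Set.mem_setOf_eq, not_not] at hk
  simp [hk]

lemma sig_shift (d : ℕ) (φ : (Fin d → ℝ) → ℝ) (c : (Fin d → ℤ) → ℝ)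
    (l : Fin d → ℤ) (x : Fin d → ℝ) :
    sig d φ c (fun i => x i + l i) = sig d φ (fun k => c (fun i => k i + l i)) x := by
  unfold sig
  rw [← (Equiv.addRight l).tsum_eq (fun k => c k * φ (fun i => (x i + l i) - k i))]
  apply tsum_congr
  intro k
  have h1 : (Equiv.addRight l) k = fun i => k i + l i := rfl
  rw [h1]
  have h2 : (fun i => x i + (l i : ℝ) - (((fun i => k i + l i : Fin d → ℤ) i : ℤ) : ℝ))
      = fun i => x i - (k i : ℝ) := by
    funext i; push_cast; ring
  rw [h2]

lemma sig_sub (d : ℕ) (φ : (Fin d → ℝ) → ℝ) (hsupp : HasCompactSupport φ)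
    (c₁ c₂ : (Fin d → ℤ) → ℝ) (x : Fin d → ℝ) :
    sig d φ (fun k => c₁ k - c₂ k) x = sig d φ c₁ x - sig d φ c₂ x := by
  unfold sig
  rw [← Summable.tsum_sub (summ d φ hsupp c₁ x) (summ d φ hsupp c₂ x)]
  apply tsum_congr; intro k; ring

lemma sig_add (d : ℕ) (φ : (Fin d → ℝ) → ℝ) (hsupp : HasCompactSupport φ)
    (c₁ c₂ : (Fin d → ℤ) → ℝ) (x : Fin d → ℝ) :
    sig d φ (fun k => c₁ k + c₂ k) x = sig d φ c₁ x + sig d φ c₂ x := by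
  unfold sig
  rw [← Summable.tsum_add (summ d φ hsupp c₁ x) (summ d φ hsupp c₂ x)]
  apply tsum_congr; intro k; ring

/-- under the hypotheses of the general phaseless sampling theorem,
if `|g| = |f|` on `Γ + ℤ^d`, then on each `K_{A_m} + l` the coefficients of `g`
equal those of `f` up to a sign `ε_{l,m} ∈ {−1,1}`; and if moreover `𝒢_f` is
connected, then `g = ε f` for a single sign `ε ∈ {−1,1}`. -/
theorem stmt14 (d M : ℕ) (φ : (Fin d → ℝ) → ℝ)
    (hcont : Continuous φ) (hsupp : HasCompactSupport φ)
    (A : Fin M → Set (Fin d → ℝ))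
    (hAo : ∀ m, IsOpen (A m)) (hAb : ∀ m, Bornology.IsBounded (A m))
    (hLLI : ∀ m, ∀ c : (Fin d → ℤ) → ℝ, (∀ x ∈ A m, sig d φ c x = 0) →
      ∀ k : Fin d → ℤ, (¬ ∀ x ∈ A m, φ (fun i => x i - k i) = 0) → c k = 0)
    (hS : ∀ k : Fin d → ℤ, (∃ x, φ x * φ (fun i => x i - k i) ≠ 0) →
      ∃ x, φ x * φ (fun i => x i - k i) ≠ 0 ∧
        ∃ (m : Fin M) (l : Fin d → ℤ), (fun i => x i - l i) ∈ A m)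
    (hLCP : ∀ m, LCPphi d φ (A m))
    (Γ : Fin M → Finset (Fin d → ℝ)) (hΓA : ∀ m, ↑(Γ m) ⊆ A m)
    (hdet : ∀ m, ∀ l : Fin d → ℤ, ∀ c c' : (Fin d → ℤ) → ℝ,
      (∀ γ ∈ Γ m, |sig d φ c' (fun i => γ i + l i)| = |sig d φ c (fun i => γ i + l i)|) →
      ∀ x ∈ A m, |sig d φ c' (fun i => x i + l i)| = |sig d φ c (fun i => x i + l i)|)
    (c c' : (Fin d → ℤ) → ℝ)
    (hsamp : ∀ m, ∀ γ ∈ Γ m, ∀ l : Fin d → ℤ,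
      |sig d φ c' (fun i => γ i + l i)| = |sig d φ c (fun i => γ i + l i)|) :
    (∀ (l : Fin d → ℤ) (m : Fin M), ∃ ε : ℝ, (ε = 1 ∨ ε = -1) ∧
      ∀ k' : Fin d → ℤ, (¬ ∀ x ∈ A m, φ (fun i => x i - k' i) = 0) →
        c' (fun i => k' i + l i) = ε * c (fun i => k' i + l i)) ∧
    ((∀ k k' : Fin d → ℤ, c k ≠ 0 → c k' ≠ 0 →
        Relation.ReflTransGen (GraphAdj d φ c) k k') →
      ∃ ε : ℝ, (ε = 1 ∨ ε = -1) ∧ ∀ x, sig d φ c' x = ε * sig d φ c x) := by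
  have part1 : ∀ (l : Fin d → ℤ) (m : Fin M), ∃ ε : ℝ, (ε = 1 ∨ ε = -1) ∧
      ∀ k' : Fin d → ℤ, (¬ ∀ x ∈ A m, φ (fun i => x i - k' i) = 0) →
        c' (fun i => k' i + l i) = ε * c (fun i => k' i + l i) := by
    intro l m
    set cm : (Fin d → ℤ) → ℝ := fun k => c (fun i => k i + l i) with hcm
    set cm' : (Fin d → ℤ) → ℝ := fun k => c' (fun i => k i + l i) with hcm'
    have habs : ∀ x ∈ A m, |sig d φ cm' x| = |sig d φ cm x| := by
      intro x hx
      have h := hdet m l c c' (fun γ hγ => hsamp m γ hγ l) x hx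
      rwa [sig_shift d φ c l x, sig_shift d φ c' l x] at h
    have hprod : ∀ x ∈ A m,
        sig d φ (fun k => cm' k - cm k) x * sig d φ (fun k => cm' k + cm k) x = 0 := by
      intro x hx
      rw [sig_sub d φ hsupp, sig_add d φ hsupp]
      have h := habs x hx
      have hsq : sig d φ cm' x ^ 2 = sig d φ cm x ^ 2 := by
        rw [← sq_abs, ← sq_abs (sig d φ cm x), h]
      nlinarith [hsq]
    by_cases h1 : ∀ x ∈ A m, sig d φ (fun k => cm' k - cm k) x = 0
    · refine ⟨1, Or.inl rfl, fun k' hk' => ?_⟩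
      have := hLLI m _ h1 k' hk'
      have : cm' k' - cm k' = 0 := this
      simp only [hcm, hcm'] at this ⊢
      linarith
    · have h2 : ∀ x ∈ A m, sig d φ (fun k => cm' k + cm k) x = 0 := by
        by_contra h2
        apply hLCP m {x ∈ A m | sig d φ (fun k => cm' k - cm k) x = 0}
          (Set.sep_subset _ _)
        refine ⟨fun k => cm' k - cm k, fun k => cm' k + cm k, ?_, h2,
          fun x hx => hx.2, fun x hx => ?_⟩
        · intro hall
          exact h1 hall
        · have hx1 : x ∈ A m := hx.1
          have hx2 : sig d φ (fun k => cm' k - cm k) x ≠ 0 := by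
            intro h0
            exact hx.2 ⟨hx1, h0⟩
          have := hprod x hx1
          exact (mul_eq_zero.1 this).resolve_left hx2
      refine ⟨-1, Or.inr rfl, fun k' hk' => ?_⟩
      have := hLLI m _ h2 k' hk'
      have : cm' k' + cm k' = 0 := this
      simp only [hcm, hcm'] at this ⊢
      linarith
  refine ⟨part1, ?_⟩
  intro hconn
  by_cases hφ : ∃ x0, φ x0 ≠ 0
  · obtain ⟨x0, hx0⟩ := hφ
    have h0 : ∃ x, φ x * φ (fun i => x i - ((0 : Fin d → ℤ)) i) ≠ 0 := by
      refine ⟨x0, ?_⟩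
      have : (fun i => x0 i - (((0 : Fin d → ℤ)) i : ℝ)) = x0 := by
        funext i; simp
      rw [this]
      exact mul_ne_zero hx0 hx0
    obtain ⟨x₁, hx₁, m₀, l₀, hm₀⟩ := hS 0 h0
    have hx₁' : φ x₁ ≠ 0 := by
      intro h; rw [h] at hx₁; simp at hx₁
    have keysign : ∀ k : Fin d → ℤ, ∃ ε : ℝ, (ε = 1 ∨ ε = -1) ∧ c' k = ε * c k := by
      intro k
      obtain ⟨ε, hε, hcoef⟩ := part1 (fun i => k i + l₀ i) m₀
      refine ⟨ε, hε, ?_⟩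
      have hne : ¬ ∀ x ∈ A m₀, φ (fun i => x i - ((-l₀ : Fin d → ℤ)) i) = 0 := by
        push_neg
        refine ⟨fun i => x₁ i - l₀ i, hm₀, ?_⟩
        have : (fun i => (x₁ i - (l₀ i : ℝ)) - (((-l₀ : Fin d → ℤ)) i : ℝ)) = x₁ := by
          funext i; simp only [Pi.neg_apply]; push_cast; ring
        rw [this]; exact hx₁'
      have h := hcoef (-l₀) hne
      have hk : (fun i => ((-l₀ : Fin d → ℤ)) i + (k i + l₀ i)) = k := by
        funext i; simp
      rwa [hk] at h
    have edgesign : ∀ a b : Fin d → ℤ, GraphAdj d φ c a b →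
        ∀ ε : ℝ, c' a = ε * c a → c' b = ε * c b := by
      rintro a b ⟨hab, hca, hcb, x, hx⟩ ε hεa
      have hSb : ∃ y, φ y * φ (fun i => y i - ((b - a : Fin d → ℤ)) i) ≠ 0 := by
        refine ⟨fun i => x i - a i, ?_⟩
        have e2 : (fun i => (x i - (a i : ℝ)) - (((b - a : Fin d → ℤ)) i : ℝ))
            = fun i => x i - (b i : ℝ) := by
          funext i; push_cast [Pi.sub_apply]; ring
        rw [e2]
        exact hx
      obtain ⟨y, hy, m, l, hml⟩ := hS (b - a) hSb
      have hy1 : φ y ≠ 0 := fun h => by rw [h] at hy; simp at hy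
      have hy2 : φ (fun i => y i - ((b - a : Fin d → ℤ)) i) ≠ 0 :=
        fun h => by rw [h] at hy; simp at hy
      obtain ⟨ε', hε', hco⟩ := part1 (fun i => l i + a i) m
      have hA1 : ¬ ∀ z ∈ A m, φ (fun i => z i - ((-l : Fin d → ℤ)) i) = 0 := by
        push_neg
        refine ⟨fun i => y i - l i, hml, ?_⟩
        have : (fun i => (y i - (l i : ℝ)) - (((-l : Fin d → ℤ)) i : ℝ)) = y := by
          funext i; simp only [Pi.neg_apply]; push_cast; ring
        rw [this]; exact hy1
      have hA2 : ¬ ∀ z ∈ A m, φ (fun i => z i - ((b - l - a : Fin d → ℤ)) i) = 0 := by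
        push_neg
        refine ⟨fun i => y i - l i, hml, ?_⟩
        have : (fun i => (y i - (l i : ℝ)) - (((b - l - a : Fin d → ℤ)) i : ℝ))
            = fun i => y i - ((b - a : Fin d → ℤ)) i := by
          funext i; push_cast [Pi.sub_apply]; ring
        rw [this]; exact hy2
      have e₁ := hco (-l) hA1
      have e₂ := hco (b - l - a) hA2
      have ha' : (fun i => ((-l : Fin d → ℤ)) i + (l i + a i)) = a := by
        funext i; simp
      have hb' : (fun i => ((b - l - a : Fin d → ℤ)) i + (l i + a i)) = b := by
        funext i; simp only [Pi.sub_apply]; ring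
      rw [ha'] at e₁
      rw [hb'] at e₂
      have hεε : ε' = ε := by
        have h1 : ε' * c a = ε * c a := by rw [← e₁, hεa]
        exact mul_right_cancel₀ hca h1
      rw [e₂, hεε]
    by_cases hc : ∀ k, c k = 0
    · refine ⟨1, Or.inl rfl, fun x => ?_⟩
      have hc' : ∀ k, c' k = 0 := by
        intro k
        obtain ⟨ε, _, h⟩ := keysign k
        rw [hc k] at h; simpa using h
      have hs1 : sig d φ c' x = 0 := by
        unfold sig
        refine (tsum_congr (fun k => ?_)).trans tsum_zero
        rw [hc' k]; ring
      have hs2 : sig d φ c x = 0 := by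
        unfold sig
        refine (tsum_congr (fun k => ?_)).trans tsum_zero
        rw [hc k]; ring
      rw [hs1, hs2]; ring
    · push_neg at hc
      obtain ⟨k₀, hk₀⟩ := hc
      obtain ⟨ε, hε, hεk₀⟩ := keysign k₀
      have hprop : ∀ k2 : Fin d → ℤ, Relation.ReflTransGen (GraphAdj d φ c) k₀ k2 →
          c' k2 = ε * c k2 := by
        intro k2 hpath
        induction hpath with
        | refl => exact hεk₀
        | tail hab hadj ih => exact edgesign _ _ hadj ε ih
      have hall : ∀ k, c' k = ε * c k := by
        intro k
        by_cases hck : c k = 0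
        · obtain ⟨ε₂, _, h⟩ := keysign k
          rw [hck] at h ⊢
          simpa using h
        · exact hprop k (hconn k₀ k hk₀ hck)
      refine ⟨ε, hε, fun x => ?_⟩
      unfold sig
      rw [← tsum_mul_left]
      exact tsum_congr (fun k => by rw [hall k]; ring)
  · push_neg at hφ
    refine ⟨1, Or.inl rfl, fun x => ?_⟩
    have hs : ∀ e : (Fin d → ℤ) → ℝ, sig d φ e x = 0 := by
      intro e
      unfold sig
      refine (tsum_congr (fun k => ?_)).trans tsum_zero
      rw [hφ]; ring
    rw [hs c', hs c]; ring
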